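/- Let T be a finite plane tree with n vertices. Set j(k) = 2k + S_T(k) for 0 ≤ k ≤ n. Then j is strictly increasing with j(0) = 0 and j(n) = 2n−1, and for all 0 ≤ k ≤ n−1 the Łukasiewicz walk S_{corot T} satisfies on the integer interval [j(k), j(k+1)]: if j(k+1) = j(k)+1, then S_{corot T}(j(k)) = S_T(k) and S_{corot T}(j(k+1)) = S_T(k+1); otherwise, S_{corot T} is affine on the integer interval [j(k), j(k+1)−1] with S_{corot T}(j(k)) = S_T(k) and S_{corot T}(j(k+1)−1) = S_T(k+1)+1, and then S_{corot T}(j(k+1)) = S_T(k+1). -/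

import Mathlib

inductive PTree : Type
  | node : List PTree → PTree

namespace PTree

instance : Inhabited PTree := ⟨node []⟩

mutual
def size : PTree → ℕ
  | node ts => 1 + sizeList ts
def sizeList : List PTree → ℕ
  | [] => 0
  | t :: ts => size t + sizeList ts
end

def deg : PTree → ℕ
  | node ts => ts.length

mutual
def degreesAux : PTree → List ℕ
  | node ts => ts.length :: degreesListAux ts
def degreesListAux : List PTree → List ℕ
  | [] => []
  | t :: ts => degreesAux t ++ degreesListAux ts
end

mutual
def heightsAux : PTree → ℕ → List ℕ
  | node ts, d => d :: heightsListAux ts (d + 1)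
def heightsListAux : List PTree → ℕ → List ℕ
  | [], _ => []
  | t :: ts, d => heightsAux t d ++ heightsListAux ts d
end

mutual
def contourAux : PTree → ℕ → List ℕ
  | node ts, d => d :: contourListAux ts (d + 1)
def contourListAux : List PTree → ℕ → List ℕ
  | [], _ => []
  | t :: ts, d => contourAux t d ++ (d - 1) :: contourListAux ts d
end

mutual
def verticesAux : PTree → List ℕ → List (List ℕ)
  | node ts, p => p :: verticesListAux ts p 0
def verticesListAux : List PTree → List ℕ → ℕ → List (List ℕ)
  | [], _, _ => []
  | t :: ts, p, i => verticesAux t (p ++ [i]) ++ verticesListAux ts p (i + 1)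
end

def vertices (T : PTree) : List (List ℕ) := verticesAux T []

/-- Height process of a plane tree. -/
def H (T : PTree) (k : ℕ) : ℕ := (heightsAux T 0).getD k 0

/-- Contour process of a plane tree. -/
def C (T : PTree) (k : ℕ) : ℕ := (contourAux T 0).getD k 0

/-- Łukasiewicz walk of a plane tree. -/
def S (T : PTree) (k : ℕ) : ℤ :=
  (((degreesAux T).take k).map (fun d => (d : ℤ) - 1)).sum

def subtreeAt : List ℕ → PTree → Option PTree
  | [], t => some t
  | i :: p, node ts => (ts[i]?).bind (subtreeAt p)

def isInternal (T : PTree) (p : List ℕ) : Bool :=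
  match subtreeAt p T with
  | some (node (_ :: _)) => true
  | _ => false

def isVertex (T : PTree) (p : List ℕ) : Bool := (subtreeAt p T).isSome

def rot : PTree → PTree
  | node [] => node []
  | node (t :: ts) => node [rot t, rot (node ts)]

mutual
def corot : PTree → PTree
  | node ts => corotAux ts (node [])
def corotAux : List PTree → PTree → PTree
  | [], acc => acc
  | t :: ts, acc => corotAux ts (node [acc, corot t])
end

mutual
def mirror : PTree → PTree
  | node ts => node (mirrorList ts)
def mirrorList : List PTree → List PTree
  | [] => []
  | t :: ts => mirrorList ts ++ [mirror t]
end

mutual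
def internalTree : PTree → PTree
  | node ts => node (internalList ts)
def internalList : List PTree → List PTree
  | [] => []
  | node [] :: ts => internalList ts
  | t :: ts => internalTree t :: internalList ts
end

def mirrorPath : PTree → List ℕ → List ℕ
  | _, [] => []
  | node ts, i :: p =>
      (ts.length - 1 - i) ::
        (match ts[i]? with
         | some t => mirrorPath t p
         | none => p)

def lexLt : List ℕ → List ℕ → Bool
  | _, [] => false
  | [], _ :: _ => true
  | a :: as, b :: bs => if a < b then true else if a = b then lexLt as bs else false

def nonRootVertices (T : PTree) : List (List ℕ) := (vertices T).tail

def internalVertices (T : PTree) : List (List ℕ) :=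
  (vertices T).filter (fun p => isInternal T p)

/-- the order-preserving identification between non-root vertices of `T` and
internal vertices of `rot T`. -/
def iota (T : PTree) (u : List ℕ) : List ℕ :=
  (internalVertices (rot T)).getD ((nonRootVertices T).idxOf u) []

/-- `L(u)`: number of edges grafted on the left of the ancestral line of `u`. -/
def Lnum (T : PTree) (u : List ℕ) : ℕ :=
  ((vertices T).filter (fun w =>
      !w.isEmpty && (w.dropLast.isPrefixOf u && w.dropLast != u)
        && !(w.isPrefixOf u && w != u) && lexLt w u)).length

/-- mirrored enumeration of `T`. -/
def mirroredEnum (T : PTree) (k : ℕ) : List ℕ :=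
  mirrorPath (mirror T) ((vertices (mirror T)).getD k [])

def descendR (T : PTree) : ℕ → List ℕ → List ℕ
  | 0, p => p
  | fuel + 1, p => if isInternal T (p ++ [1]) then descendR T fuel (p ++ [1]) else p

def ascend (visited : List (List ℕ)) : ℕ → List ℕ → List ℕ
  | 0, p => p.dropLast
  | fuel + 1, p => if p.dropLast ∈ visited then ascend visited fuel p.dropLast else p.dropLast

def rightmostSeq (T : PTree) : ℕ → List (List ℕ)
  | 0 => []
  | k + 1 =>
      let prev := rightmostSeq T k
      let next :=
        match prev.getLast? with
        | none => descendR T (size T) []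
        | some p =>
            if isInternal T (p ++ [0]) then descendR T (size T) (p ++ [0])
            else ascend prev (size T) p
      prev ++ [next]

def Hstar (T : PTree) (k : ℕ) : ℤ :=
  if k = 0 ∨ size T ≤ k then 0 else ((iota T (mirroredEnum T k)).length : ℤ)

/-! ### Auxiliary lemmas -/

lemma map_coe_eq (l : List ℕ) :
    (l.map (fun d => (d : ℤ) - 1)) = l.map (fun d : ℕ => (d : ℤ) - 1) := by
  induction l with
  | nil => rfl
  | cons d l ih => simpa using ih

lemma degreesListAux_eq (ts : List PTree) : degreesListAux ts = ts.flatMap degreesAux := by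
  induction ts with
  | nil => rfl
  | cons t ts ih => simp [degreesListAux, ih]

mutual
theorem length_degreesAux : ∀ T : PTree, (degreesAux T).length = size T
  | node ts => by
    simp [degreesAux, size, length_degreesListAux ts]
    omega
theorem length_degreesListAux : ∀ ts : List PTree, (degreesListAux ts).length = sizeList ts
  | [] => rfl
  | t :: ts => by
    simp [degreesListAux, sizeList, length_degreesAux t, length_degreesListAux ts]
end

mutual
theorem sum_degreesAux : ∀ T : PTree, (degreesAux T).sum + 1 = size T
  | node ts => by
    have := sum_degreesListAux ts
    simp [degreesAux, size, List.sum_cons]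
    omega
theorem sum_degreesListAux : ∀ ts : List PTree, (degreesListAux ts).sum + ts.length = sizeList ts
  | [] => rfl
  | t :: ts => by
    have h1 := sum_degreesAux t
    have h2 := sum_degreesListAux ts
    simp [degreesListAux, sizeList]
    omega
end

lemma replicate_append_cons (n : ℕ) (X : List ℕ) :
    List.replicate n 2 ++ 2 :: X = 2 :: (List.replicate n 2 ++ X) := by
  induction n with
  | zero => rfl
  | succ n ih => simp [List.replicate_succ, ih]

/-- the block in the degree sequence of `corot T` corresponding to a degree-`d` vertex. -/
def Fb (d : ℕ) : List ℕ := List.replicate d 2 ++ [0]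

mutual
theorem degreesAux_corot : ∀ T : PTree, degreesAux (corot T) = (degreesAux T).flatMap Fb
  | node ts => by
    rw [corot, degreesAux_corotAux ts (node [])]
    simp [degreesAux, degreesListAux, Fb, degreesListAux_eq, List.flatMap_assoc]
theorem degreesAux_corotAux : ∀ (ts : List PTree) (acc : PTree),
    degreesAux (corotAux ts acc) =
      List.replicate ts.length 2 ++ degreesAux acc ++
        ts.flatMap (fun t => (degreesAux t).flatMap Fb)
  | [], acc => by simp [corotAux]
  | t :: ts, acc => by
    rw [corotAux, degreesAux_corotAux ts (node [acc, corot t])]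
    simp only [degreesAux, degreesListAux, degreesAux_corot t, List.length_cons,
      List.length_nil, List.flatMap_cons, List.append_nil, List.append_assoc,
      List.cons_append, List.replicate_succ]
    rw [show (0 + 1 + 1 : ℕ) = 2 from rfl, replicate_append_cons]
end

/-- the block in the Łukasiewicz increment sequence of `corot T`. -/
def Bf (d : ℕ) : List ℤ := List.replicate d 1 ++ [-1]

lemma length_Bf (d : ℕ) : (Bf d).length = d + 1 := by simp [Bf]

lemma sum_Bf (d : ℕ) : (Bf d).sum = (d : ℤ) - 1 := by simp [Bf]; ring

lemma map_Fb_eq (l : List ℕ) :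
    (l.flatMap Fb).map (fun d : ℕ => (d : ℤ) - 1) = l.flatMap Bf := by
  induction l with
  | nil => rfl
  | cons d l ih =>
    simp only [List.flatMap_cons, List.map_append, Fb, Bf, List.map_replicate, ih,
      List.map_cons, List.map_nil]
    norm_num

def jN (ds : List ℕ) (k : ℕ) : ℕ := ((ds.take k).flatMap Bf).length

def sI (ds : List ℕ) (k : ℕ) : ℤ := ((ds.take k).map (fun d : ℕ => (d : ℤ) - 1)).sum

lemma sum_flatMap_Bf (l : List ℕ) :
    (l.flatMap Bf).sum = (l.map (fun d : ℕ => (d : ℤ) - 1)).sum := by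
  induction l with
  | nil => rfl
  | cons d l ih =>
    simp only [List.flatMap_cons, List.sum_append, List.map_cons, List.sum_cons, ih, sum_Bf]

lemma length_flatMap_Bf (l : List ℕ) :
    ((l.flatMap Bf).length : ℤ)
      = 2 * l.length + (l.map (fun d : ℕ => (d : ℤ) - 1)).sum := by
  induction l with
  | nil => simp
  | cons d l ih =>
    simp only [List.flatMap_cons, List.length_append, List.map_cons, List.sum_cons, length_Bf,
      List.length_cons]
    push_cast
    push_cast at ih
    linarith

lemma jN_cast (ds : List ℕ) (k : ℕ) (hk : k ≤ ds.length) :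
    (jN ds k : ℤ) = 2 * k + sI ds k := by
  have h := length_flatMap_Bf (ds.take k)
  rw [List.length_take, min_eq_left hk] at h
  rw [jN, h, sI]

lemma toNat_eq_jN (ds : List ℕ) (k : ℕ) (hk : k ≤ ds.length) :
    (2 * (k : ℤ) + sI ds k).toNat = jN ds k := by
  have h := jN_cast ds k hk
  omega

lemma take_succ_getElem (ds : List ℕ) (k : ℕ) (hk : k < ds.length) :
    ds.take (k + 1) = ds.take k ++ [ds[k]] := by
  rw [List.take_succ, List.getElem?_eq_getElem hk]
  rfl

lemma jN_succ (ds : List ℕ) (k : ℕ) (hk : k < ds.length) :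
    jN ds (k + 1) = jN ds k + ds[k] + 1 := by
  rw [jN, take_succ_getElem ds k hk, List.flatMap_append]
  simp only [List.flatMap_cons, List.flatMap_nil, List.append_nil, List.length_append,
    length_Bf, jN]
  omega

lemma sI_succ (ds : List ℕ) (k : ℕ) (hk : k < ds.length) :
    sI ds (k + 1) = sI ds k + (ds[k] : ℤ) - 1 := by
  rw [sI, sI, take_succ_getElem ds k hk, List.map_append, List.sum_append]
  simp
  ring

lemma jN_strictMono (ds : List ℕ) : ∀ k l : ℕ, k < l → l ≤ ds.length → jN ds k < jN ds l := by
  intro k l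
  induction l with
  | zero => omega
  | succ m ih =>
    intro hkl hle
    have hm : m < ds.length := by omega
    have hs := jN_succ ds m hm
    rcases Nat.lt_or_ge k m with h | h
    · have := ih h (by omega); omega
    · have : k = m := by omega
      subst this; omega

/-- value of the corot walk at block boundaries -/
lemma W_boundary (ds : List ℕ) (k : ℕ) (hk : k ≤ ds.length) :
    ((ds.flatMap Bf).take (jN ds k)).sum = sI ds k := by
  have hsplit : ds.flatMap Bf = (ds.take k).flatMap Bf ++ (ds.drop k).flatMap Bf := by
    rw [← List.flatMap_append, List.take_append_drop]
  rw [hsplit, jN, List.take_left, sum_flatMap_Bf, sI]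

/-- value of the corot walk inside a block -/
lemma W_mid (ds : List ℕ) (k : ℕ) (hk : k < ds.length) (i : ℕ) (hi : i ≤ ds[k] + 1) :
    ((ds.flatMap Bf).take (jN ds k + i)).sum = sI ds k + ((Bf ds[k]).take i).sum := by
  have hsplit : ds.flatMap Bf
      = (ds.take k).flatMap Bf ++ (Bf ds[k] ++ (ds.drop (k + 1)).flatMap Bf) := by
    conv_lhs => rw [← List.take_append_drop k ds]
    rw [List.drop_eq_getElem_cons hk, List.flatMap_append, List.flatMap_cons]
  rw [hsplit, jN, List.take_length_add_append, List.sum_append, sum_flatMap_Bf, ← sI,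
    List.take_append_of_le_length (by rw [length_Bf]; omega)]

lemma sum_take_Bf (d i : ℕ) (hi : i ≤ d) : ((Bf d).take i).sum = (i : ℤ) := by
  rw [Bf, List.take_append_of_le_length (by simpa using hi), List.take_replicate]
  simp [min_eq_left hi]

lemma sum_take_Bf_full (d : ℕ) : ((Bf d).take (d + 1)).sum = (d : ℤ) - 1 := by
  rw [show d + 1 = (Bf d).length from (length_Bf d).symm, List.take_length, sum_Bf]

lemma S_eq_sI (T : PTree) (k : ℕ) : S T k = sI (degreesAux T) k := by
  rw [S, map_coe_eq, sI]

lemma S_corot_eq (T : PTree) (m : ℕ) :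
    S (corot T) m = (((degreesAux T).flatMap Bf).take m).sum := by
  rw [S, map_coe_eq, List.map_take, degreesAux_corot, map_Fb_eq]

lemma one_le_size (T : PTree) : 1 ≤ size T := by
  cases T with
  | node ts => rw [size]; omega

lemma sum_map_sub_one (l : List ℕ) :
    (l.map (fun d : ℕ => (d : ℤ) - 1)).sum = (l.sum : ℤ) - l.length := by
  induction l with
  | nil => simp
  | cons d l ih =>
    simp only [List.map_cons, List.sum_cons, List.length_cons]
    push_cast
    push_cast at ih
    omega

lemma sI_full (T : PTree) : sI (degreesAux T) (size T) = -1 := by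
  rw [sI, ← length_degreesAux, List.take_length, sum_map_sub_one, length_degreesAux]
  have := sum_degreesAux T
  omega

end PTree

open PTree

/-- A `ℤ`-valued process is affine on an integer interval if its successive
increments there are constant. -/
def AffineOn (f : ℕ → ℤ) (a b : ℕ) : Prop :=
  ∀ m : ℕ, a ≤ m → m + 2 ≤ b → f (m + 2) - f (m + 1) = f (m + 1) - f m

-- STATEMENT 17
theorem stmt17 (T : PTree) :
    (∀ k l : ℕ, k < l → l ≤ size T →
      (2 * (k : ℤ) + S T k).toNat < (2 * (l : ℤ) + S T l).toNat) ∧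
    (2 * (0 : ℤ) + S T 0).toNat = 0 ∧
    (2 * (size T : ℤ) + S T (size T)).toNat = 2 * size T - 1 ∧
    (∀ k < size T,
      ((2 * ((k : ℤ) + 1) + S T (k + 1)).toNat = (2 * (k : ℤ) + S T k).toNat + 1 →
        S (corot T) ((2 * (k : ℤ) + S T k).toNat) = S T k ∧
        S (corot T) ((2 * ((k : ℤ) + 1) + S T (k + 1)).toNat) = S T (k + 1)) ∧
      ((2 * ((k : ℤ) + 1) + S T (k + 1)).toNat ≠ (2 * (k : ℤ) + S T k).toNat + 1 →
        AffineOn (S (corot T)) ((2 * (k : ℤ) + S T k).toNat)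
          ((2 * ((k : ℤ) + 1) + S T (k + 1)).toNat - 1) ∧
        S (corot T) ((2 * (k : ℤ) + S T k).toNat) = S T k ∧
        S (corot T) ((2 * ((k : ℤ) + 1) + S T (k + 1)).toNat - 1) = S T (k + 1) + 1 ∧
        S (corot T) ((2 * ((k : ℤ) + 1) + S T (k + 1)).toNat) = S T (k + 1))) := by
  set ds := degreesAux T with hds
  have hlen : ds.length = size T := length_degreesAux T
  have hS : ∀ k, S T k = sI ds k := fun k => S_eq_sI T k
  have hW : ∀ m, S (corot T) m = ((ds.flatMap Bf).take m).sum := S_corot_eq T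
  have htn : ∀ k, k ≤ size T → (2 * (k : ℤ) + S T k).toNat = jN ds k := by
    intro k hk
    rw [hS]
    exact toNat_eq_jN ds k (by omega)
  have wb : ∀ m ≤ size T, S (corot T) (jN ds m) = sI ds m := by
    intro m hm
    rw [hW, W_boundary ds m (by omega)]
  refine ⟨?_, ?_, ?_, ?_⟩
  · intro k l hkl hl
    rw [htn k (by omega), htn l hl]
    exact jN_strictMono ds k l hkl (by omega)
  · have h0 : S T 0 = 0 := by rw [hS]; simp [sI]
    rw [h0]
    rfl
  · rw [hS, hds, sI_full]
    have := one_le_size T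
    omega
  · intro k hk
    have hk' : k < ds.length := by omega
    have hj1 : jN ds (k + 1) = jN ds k + ds[k] + 1 := jN_succ ds k hk'
    have hs1 : sI ds (k + 1) = sI ds k + (ds[k] : ℤ) - 1 := sI_succ ds k hk'
    have htk : (2 * (k : ℤ) + S T k).toNat = jN ds k := htn k (le_of_lt hk)
    have hcast : 2 * ((k : ℤ) + 1) + S T (k + 1) = 2 * (((k + 1 : ℕ) : ℤ)) + S T (k + 1) := by
      push_cast; ring
    have htk1 : (2 * ((k : ℤ) + 1) + S T (k + 1)).toNat = jN ds (k + 1) := by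
      rw [hcast, htn (k + 1) (by omega)]
    have wm : ∀ i ≤ ds[k] + 1,
        S (corot T) (jN ds k + i) = sI ds k + ((Bf ds[k]).take i).sum := by
      intro i hi
      rw [hW]
      exact W_mid ds k hk' i hi
    constructor
    · intro _
      constructor
      · rw [htk, wb k (by omega), hS]
      · rw [htk1, wb (k + 1) (by omega), hS]
    · intro hne
      have hd : 1 ≤ ds[k] := by
        rcases Nat.eq_zero_or_pos ds[k] with h | h
        · exfalso; apply hne; omega
        · exact h
      refine ⟨?_, ?_, ?_, ?_⟩
      · rw [htk, htk1]
        intro m h1 h2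
        have hi : m - jN ds k + 2 ≤ ds[k] := by omega
        rw [show m + 2 = jN ds k + (m - jN ds k + 2) by omega,
          show m + 1 = jN ds k + (m - jN ds k + 1) by omega,
          show m = jN ds k + (m - jN ds k) by omega,
          wm _ (by omega), wm _ (by omega), wm _ (by omega),
          sum_take_Bf _ _ (by omega), sum_take_Bf _ _ (by omega), sum_take_Bf _ _ (by omega)]
        omega
      · rw [htk, wb k (by omega), hS]
      · rw [htk1, show jN ds (k + 1) - 1 = jN ds k + ds[k] by omega,
          wm ds[k] (by omega), sum_take_Bf _ _ le_rfl, hS, hs1]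
        ring
      · rw [htk1, wb (k + 1) (by omega), hS]
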